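/- Assume J positive, strictly decreasing, ∑_{n=1}^∞ J(n) < ∞, and 0 < h < ∑_{n=1}^∞ J(n). Define k_c = min{ k ∈ ℕ : ∑_{n=k+1}^∞ J(n) ≤ h }. Then for all sufficiently large N, the function f(k) = H(L^(k)) on {0,...,N} attains a unique strict global maximum at k_c. -/

import Mathlib

open Finset

/-- Long-range Ising Hamiltonian with free boundary conditions on {0,...,N-1}:
`H(σ) = -∑_{i<j} J(|i-j|) σᵢ σⱼ - h ∑ᵢ σᵢ`. -/
noncomputable def H (N : ℕ) (J : ℕ → ℝ) (h : ℝ) (σ : Fin N → ℝ) : ℝ :=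
  -(∑ i : Fin N, ∑ j : Fin N,
      if (i : ℕ) < (j : ℕ) then J (Nat.dist (i : ℕ) (j : ℕ)) * σ i * σ j else 0)
    - h * ∑ i : Fin N, σ i

/-- A spin configuration takes values in {-1, +1}. -/
def IsConfig {N : ℕ} (σ : Fin N → ℝ) : Prop := ∀ i, σ i = 1 ∨ σ i = -1

/-- The configuration `L^(k)`: +1 on the first k sites, -1 elsewhere. -/
def Lconf (N k : ℕ) : Fin N → ℝ := fun i => if (i : ℕ) < k then 1 else -1

/-- The configuration `R^(k)`: +1 on the last k sites, -1 elsewhere. -/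
def Rconf (N k : ℕ) : Fin N → ℝ := fun i => if N - k ≤ (i : ℕ) then 1 else -1

lemma pointwise (J : ℕ → ℝ) (N k : ℕ) (i j : Fin N) :
    (if (i : ℕ) < (j : ℕ) then J (Nat.dist (i:ℕ) (j:ℕ)) * Lconf N (k+1) i * Lconf N (k+1) j else 0)
    - (if (i : ℕ) < (j : ℕ) then J (Nat.dist (i:ℕ) (j:ℕ)) * Lconf N k i * Lconf N k j else 0)
    = (if (i:ℕ) = k then (if k < (j:ℕ) then -2 * J (Nat.dist (i:ℕ) (j:ℕ)) else 0) else 0)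
      + (if (j:ℕ) = k then (if (i:ℕ) < k then 2 * J (Nat.dist (i:ℕ) (j:ℕ)) else 0) else 0) := by
  simp only [Lconf]
  split_ifs <;> first | (exfalso; omega) | ring1

lemma sum_if_eq {N k : ℕ} (hk : k < N) (f : Fin N → ℝ) :
    ∑ i : Fin N, (if (i:ℕ) = k then f i else 0) = f ⟨k, hk⟩ := by
  rw [Finset.sum_eq_single (⟨k, hk⟩ : Fin N)]
  · simp
  · intro b _ hb
    rw [if_neg]
    intro hbk
    exact hb (Fin.ext hbk)
  · simp

lemma right_sum (J : ℕ → ℝ) {N k : ℕ} (hk : k < N) :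
    ∑ j : Fin N, (if k < (j:ℕ) then J (Nat.dist k (j:ℕ)) else 0)
      = ∑ m ∈ range (N - 1 - k), J (m + 1) := by
  rw [Fin.sum_univ_eq_sum_range (fun j => if k < j then J (Nat.dist k j) else 0) N]
  rw [← Finset.sum_filter]
  have : Finset.filter (fun j => k < j) (range N) = Ico (k+1) N := by
    ext x; simp only [mem_filter, mem_range, mem_Ico]; omega
  rw [this, Finset.sum_Ico_eq_sum_range]
  apply Finset.sum_congr (by congr 1; omega)
  intro m hm
  congr 1
  simp [Nat.dist_eq_sub_of_le (by omega : k ≤ k + 1 + m)]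
  omega

lemma left_sum (J : ℕ → ℝ) {N k : ℕ} (hk : k < N) :
    ∑ i : Fin N, (if (i:ℕ) < k then J (Nat.dist (i:ℕ) k) else 0)
      = ∑ m ∈ range k, J (m + 1) := by
  rw [Fin.sum_univ_eq_sum_range (fun i => if i < k then J (Nat.dist i k) else 0) N]
  rw [← Finset.sum_filter]
  have : Finset.filter (fun i => i < k) (range N) = range k := by
    ext x; simp; omega
  rw [this]
  rw [show (∑ i ∈ range k, J (Nat.dist i k))
      = ∑ i ∈ range k, J (k - 1 - i + 1) from Finset.sum_congr rfl (fun m hm => by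
    simp only [mem_range] at hm
    congr 1
    rw [Nat.dist_eq_sub_of_le (by omega : m ≤ k)]
    omega)]
  exact Finset.sum_range_reflect (fun j => J (j + 1)) k

lemma Hdiff (J : ℕ → ℝ) (h : ℝ) (N k : ℕ) (hk : k < N) :
    H N J h (Lconf N (k+1)) - H N J h (Lconf N k)
      = 2 * ((∑ m ∈ range (N-1-k), J (m+1)) - (∑ m ∈ range k, J (m+1)) - h) := by
  have hconf : (∑ i : Fin N, Lconf N (k+1) i) - ∑ i : Fin N, Lconf N k i = 2 := by
    rw [← Finset.sum_sub_distrib]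
    have : ∀ i : Fin N, Lconf N (k+1) i - Lconf N k i = (if (i:ℕ) = k then (2:ℝ) else 0) := by
      intro i
      simp only [Lconf]
      split_ifs <;> first | (exfalso; omega) | ring1
    rw [Finset.sum_congr rfl (fun i _ => this i), sum_if_eq hk]
  have hA : (∑ i : Fin N, ∑ j : Fin N,
        if (i : ℕ) < (j : ℕ) then J (Nat.dist (i:ℕ) (j:ℕ)) * Lconf N (k+1) i * Lconf N (k+1) j else 0)
      - (∑ i : Fin N, ∑ j : Fin N,
        if (i : ℕ) < (j : ℕ) then J (Nat.dist (i:ℕ) (j:ℕ)) * Lconf N k i * Lconf N k j else 0)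
      = -2 * (∑ m ∈ range (N-1-k), J (m+1)) + 2 * (∑ m ∈ range k, J (m+1)) := by
    rw [← Finset.sum_sub_distrib]
    have step1 : ∀ i : Fin N, (∑ j : Fin N,
          if (i : ℕ) < (j : ℕ) then J (Nat.dist (i:ℕ) (j:ℕ)) * Lconf N (k+1) i * Lconf N (k+1) j else 0)
        - (∑ j : Fin N,
          if (i : ℕ) < (j : ℕ) then J (Nat.dist (i:ℕ) (j:ℕ)) * Lconf N k i * Lconf N k j else 0)
        = (∑ j : Fin N, (if (i:ℕ) = k then (if k < (j:ℕ) then -2 * J (Nat.dist (i:ℕ) (j:ℕ)) else 0) else 0))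
          + (∑ j : Fin N, (if (j:ℕ) = k then (if (i:ℕ) < k then 2 * J (Nat.dist (i:ℕ) (j:ℕ)) else 0) else 0)) := by
      intro i
      rw [← Finset.sum_sub_distrib, ← Finset.sum_add_distrib]
      exact Finset.sum_congr rfl (fun j _ => pointwise J N k i j)
    rw [Finset.sum_congr rfl (fun i _ => step1 i), Finset.sum_add_distrib]
    have part1 : (∑ i : Fin N, ∑ j : Fin N,
          (if (i:ℕ) = k then (if k < (j:ℕ) then -2 * J (Nat.dist (i:ℕ) (j:ℕ)) else 0) else 0))
        = -2 * (∑ m ∈ range (N-1-k), J (m+1)) := by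
      have : ∀ i : Fin N, (∑ j : Fin N,
            (if (i:ℕ) = k then (if k < (j:ℕ) then -2 * J (Nat.dist (i:ℕ) (j:ℕ)) else 0) else 0))
          = (if (i:ℕ) = k then (∑ j : Fin N, (if k < (j:ℕ) then -2 * J (Nat.dist (i:ℕ) (j:ℕ)) else 0)) else 0) := by
        intro i
        by_cases hi : (i:ℕ) = k <;> simp [hi]
      rw [Finset.sum_congr rfl (fun i _ => this i),
        sum_if_eq hk (fun i => (∑ j : Fin N, (if k < (j:ℕ) then -2 * J (Nat.dist (i:ℕ) (j:ℕ)) else 0)))]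
      have : ∀ j : Fin N, (if k < (j:ℕ) then -2 * J (Nat.dist ((⟨k, hk⟩ : Fin N):ℕ) (j:ℕ)) else 0)
          = -2 * (if k < (j:ℕ) then J (Nat.dist k (j:ℕ)) else 0) := by
        intro j; split_ifs <;> ring1
      rw [Finset.sum_congr rfl (fun j _ => this j), ← Finset.mul_sum, right_sum J hk]
    have part2 : (∑ i : Fin N, ∑ j : Fin N,
          (if (j:ℕ) = k then (if (i:ℕ) < k then 2 * J (Nat.dist (i:ℕ) (j:ℕ)) else 0) else 0))
        = 2 * (∑ m ∈ range k, J (m+1)) := by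
      rw [Finset.sum_comm]
      have : ∀ j : Fin N, (∑ i : Fin N,
            (if (j:ℕ) = k then (if (i:ℕ) < k then 2 * J (Nat.dist (i:ℕ) (j:ℕ)) else 0) else 0))
          = (if (j:ℕ) = k then (∑ i : Fin N, (if (i:ℕ) < k then 2 * J (Nat.dist (i:ℕ) (j:ℕ)) else 0)) else 0) := by
        intro j
        by_cases hj : (j:ℕ) = k <;> simp [hj]
      rw [Finset.sum_congr rfl (fun j _ => this j),
        sum_if_eq hk (fun j => (∑ i : Fin N, (if (i:ℕ) < k then 2 * J (Nat.dist (i:ℕ) (j:ℕ)) else 0)))]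
      have : ∀ i : Fin N, (if (i:ℕ) < k then 2 * J (Nat.dist (i:ℕ) ((⟨k, hk⟩ : Fin N):ℕ)) else 0)
          = 2 * (if (i:ℕ) < k then J (Nat.dist (i:ℕ) k) else 0) := by
        intro i; split_ifs <;> ring1
      rw [Finset.sum_congr rfl (fun i _ => this i), ← Finset.mul_sum, left_sum J hk]
    rw [part1, part2]
  have hconf' : h * (∑ i : Fin N, Lconf N (k+1) i) - h * (∑ i : Fin N, Lconf N k i) = 2 * h := by
    rw [← mul_sub, hconf]; ring
  simp only [H]
  linarith [hA, hconf']

lemma chain_lt (g : ℕ → ℝ) : ∀ b a, a < b → (∀ k, a ≤ k → k < b → g k < g (k+1)) → g a < g b := by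
  intro b
  induction b with
  | zero => intro a ha _; omega
  | succ b ih =>
    intro a ha hstep
    rcases Nat.lt_or_ge a b with h' | h'
    · exact (ih a h' (fun k hk hk' => hstep k hk (by omega))).trans
        (hstep b (by omega) (by omega))
    · have : a = b := by omega
      subst this
      exact hstep a le_rfl (by omega)


/-- Corollary 3.3: if `J` is positive, strictly decreasing and summable, and
`0 < h < ∑_{n=1}^∞ J(n)`, then for all sufficiently large `N` the function
`f(k) = H(L^(k))` on `{0,…,N}` attains a unique strict global maximum at
`k_c = min { k : ∑_{n=k+1}^∞ J(n) ≤ h }`. -/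
theorem critical_droplet_size (J : ℕ → ℝ)
    (hpos : ∀ n, 1 ≤ n → 0 < J n) (hdec : ∀ n, 1 ≤ n → J (n + 1) < J n)
    (hsum : Summable fun n : ℕ => J (n + 1))
    (h : ℝ) (hh0 : 0 < h) (hh1 : h < ∑' n : ℕ, J (n + 1)) :
    ∃ N₀ : ℕ, ∀ N, N₀ ≤ N →
      ∀ i, i ≤ N → i ≠ sInf {k : ℕ | ∑' n : ℕ, J (n + k + 1) ≤ h} →
        H N J h (Lconf N i) <
          H N J h (Lconf N (sInf {k : ℕ | ∑' n : ℕ, J (n + k + 1) ≤ h})) := by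
    classical
  set Sig := ∑' n : ℕ, J (n + 1) with hSigdef
  have hpos' : ∀ n : ℕ, 0 < J (n + 1) := fun n => hpos (n + 1) (by omega)
  set S : ℕ → ℝ := fun k => ∑ m ∈ range k, J (m + 1) with hSdef
  have hT : ∀ k : ℕ, S k + (∑' n : ℕ, J (n + k + 1)) = Sig := by
    intro k
    exact Summable.sum_add_tsum_nat_add (f := fun n => J (n + 1)) k hsum
  have hmono : ∀ a b : ℕ, a ≤ b → S a ≤ S b := by
    intro a b hab
    exact Finset.sum_le_sum_of_subset_of_nonneg (Finset.range_subset_range.mpr hab)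
      (fun i _ _ => (hpos' i).le)
  have hlt : ∀ m : ℕ, S m < Sig := by
    intro m
    have h2 := hT m
    have hs : Summable fun n : ℕ => J (n + m + 1) := (summable_nat_add_iff m).mpr hsum
    have hpos2 : 0 < ∑' n : ℕ, J (n + m + 1) :=
      Summable.tsum_pos hs (fun n => (hpos' (n + m)).le) 0 (by simpa using hpos' m)
    linarith
  have ht : Filter.Tendsto (fun m => S m) Filter.atTop (nhds Sig) := hsum.hasSum.tendsto_sum_nat
  have hne : {k : ℕ | ∑' n : ℕ, J (n + k + 1) ≤ h}.Nonempty := by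
    have hev : ∀ᶠ m in Filter.atTop, Sig - h < S m :=
      ht.eventually (eventually_gt_nhds (by linarith))
    obtain ⟨m, hm⟩ := hev.exists
    refine ⟨m, ?_⟩
    have := hT m
    simp only [Set.mem_setOf_eq]
    linarith
  set kc := sInf {k : ℕ | ∑' n : ℕ, J (n + k + 1) ≤ h} with hkcdef
  have hkc_mem : (∑' n : ℕ, J (n + kc + 1)) ≤ h := Nat.sInf_mem hne
  have hkc_mem' : Sig - S kc ≤ h := by have := hT kc; linarith
  have hbelow : ∀ k, k < kc → h < Sig - S k := by
    intro k hk
    have hnotmem := Nat.notMem_of_lt_sInf hk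
    simp only [Set.mem_setOf_eq, not_le] at hnotmem
    have := hT k
    linarith
  have hkc1 : 1 ≤ kc := by
    by_contra hn
    have hkc0 : kc = 0 := by omega
    have := hkc_mem'
    rw [hkc0] at this
    simp only [hSdef, range_zero, Finset.sum_empty] at this
    linarith
  obtain ⟨M, hM⟩ : ∃ M : ℕ, S (kc - 1) + h < S M := by
    have h0 : S (kc - 1) + h < Sig := by
      have := hbelow (kc - 1) (by omega)
      linarith
    have hev : ∀ᶠ m in Filter.atTop, S (kc - 1) + h < S m :=
      ht.eventually (eventually_gt_nhds h0)
    exact hev.exists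
  refine ⟨M + kc, fun N hN i hiN hik => ?_⟩
  set g : ℕ → ℝ := fun k => H N J h (Lconf N k) with hgdef
  have step_up : ∀ k, k < kc → g k < g (k + 1) := by
    intro k hk
    have hkN : k < N := by omega
    have hd := Hdiff J h N k hkN
    have h1 : S M ≤ S (N - 1 - k) := hmono M (N - 1 - k) (by omega)
    have h2 : S k ≤ S (kc - 1) := hmono k (kc - 1) (by omega)
    have : g (k + 1) - g k = 2 * (S (N - 1 - k) - S k - h) := hd
    linarith
  have step_down : ∀ k, kc ≤ k → k < N → g (k + 1) < g k := by
    intro k hk hkN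
    have hd := Hdiff J h N k hkN
    have h1 : S (N - 1 - k) < Sig := hlt _
    have h2 : S kc ≤ S k := hmono kc k hk
    have : g (k + 1) - g k = 2 * (S (N - 1 - k) - S k - h) := hd
    linarith
  rcases lt_or_gt_of_ne hik with hlt' | hgt'
  · exact chain_lt g kc i hlt' (fun k _ hk2 => step_up k hk2)
  · have := chain_lt (fun k => -(g k)) i kc hgt'
      (fun k hk1 hk2 => by
        have := step_down k hk1 (by omega)
        simpa using this)
    simpa using this
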